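/- arXiv:1306.1679 — 8 statements merged into one kernel-verified Lean document; each statement's English description precedes it below -/
import Mathlib

section
/- Let f, g be quaternions with f² = g² = −1, and for x ∈ ℍ set x± = ½(x ± f x g), x₊f = ½(x − f x f), x₋f = ½(x + f x f), x₊g = ½(x − g x g), x₋g = ½(x + g x g). Then x± = x₊f · (1 ± fg)/2 + x₋f · (1 ∓ fg)/2 and x± = (1 ± fg)/2 · x₊g + (1 ∓ fg)/2 · x₋g. -/
open Quaternion

theorem quaternion_pm_split_as_combination (f g : ℍ[ℝ]) (hf : f ^ 2 = -1) (hg : g ^ 2 = -1)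
    (x : ℍ[ℝ]) :
    (x + f * x * g) / 2 =
      ((x - f * x * f) / 2) * ((1 + f * g) / 2) + ((x + f * x * f) / 2) * ((1 - f * g) / 2) ∧
    (x - f * x * g) / 2 =
      ((x - f * x * f) / 2) * ((1 - f * g) / 2) + ((x + f * x * f) / 2) * ((1 + f * g) / 2) ∧
    (x + f * x * g) / 2 =
      ((1 + f * g) / 2) * ((x - g * x * g) / 2) + ((1 - f * g) / 2) * ((x + g * x * g) / 2) ∧
    (x - f * x * g) / 2 =
      ((1 - f * g) / 2) * ((x - g * x * g) / 2) + ((1 + f * g) / 2) * ((x + g * x * g) / 2) := by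
  have hf' : f * f = -1 := by rw [← sq]; exact hf
  have hg' : g * g = -1 := by rw [← sq]; exact hg
  have hq : ∀ a b : ℍ[ℝ], a / 2 * (b / 2) = a * b / 4 := by
    intro a b
    have c : (2:ℍ[ℝ])⁻¹ * b = b * (2:ℍ[ℝ])⁻¹ := ((Commute.ofNat_left 2 b).inv_left₀).eq
    rw [div_eq_mul_inv, div_eq_mul_inv, div_eq_mul_inv, mul_assoc, ← mul_assoc _ b, c,
      mul_assoc, mul_assoc, ← mul_inv_rev]
    norm_num
  have h20 : (2:ℍ[ℝ]) ≠ 0 := by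
    have h : ((2:ℝ):ℍ[ℝ]) ≠ 0 := fun h => by
      have := Quaternion.coe_injective (h.trans (Quaternion.coe_zero).symm)
      norm_num at this
    exact_mod_cast h
  have h2 : ∀ a : ℍ[ℝ], a / 2 = a * 2 / 4 := by
    intro a
    rw [← hq, div_self h20, mul_one]
  refine ⟨?_, ?_, ?_, ?_⟩ <;>
  · rw [hq, hq, ← add_div, h2]
    congr 1
    have : ∀ y : ℍ[ℝ], f * (f * y) = -y := by
      intro y; rw [← mul_assoc, hf']; simp
    have hgy : ∀ y : ℍ[ℝ], g * (g * y) = -y := by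
      intro y; rw [← mul_assoc, hg']; simp
    noncomm_ring
    simp only [mul_assoc, this, hgy, hf', hg', mul_neg, mul_one, neg_neg]
    simp [smul_neg]
end

section
/- Let f, g be pure (real part zero) quaternions with f² = g² = −1, so that the quaternion conjugates satisfy f̄ = −f and ḡ = −g. For any quaternions x, y with splits x± = ½(x ± f x g) and y± = ½(y ± f y g), the real (scalar) parts of the mixed products vanish: Re(x₊ · conj(y₋)) = 0 and Re(x₋ · conj(y₊)) = 0, where conj denotes quaternion conjugation. -/
open Quaternion

private lemma re_mul_comm (a b : ℍ[ℝ]) : (a * b).re = (b * a).re := by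
  simp [Quaternion.re_mul]; ring

private lemma key (f g : ℍ[ℝ]) (hf : f * f = -1) (hg : g * g = -1)
    (hsf : star f = -f) (hsg : star g = -g) (x y : ℍ[ℝ]) :
    ((x + f * x * g) * star (y - f * y * g)).re = 0 := by
  have hstar : star (y - f * y * g) = star y - g * (star y * f) := by
    simp [star_sub, star_mul, hsf, hsg, mul_assoc]
  rw [hstar]
  set z := star y with hz
  have h4 : f * x * g * (g * (z * f)) = -(f * (x * z) * f) := by
    have hgg : g * (g * (z * f)) = -(z * f) := by rw [← mul_assoc, hg, neg_one_mul]
    simp only [mul_assoc, hgg, mul_neg, neg_mul]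
  have e : (x + f * x * g) * (z - g * (z * f))
      = x * z - x * (g * (z * f)) + f * x * g * z + f * (x * z) * f := by
    rw [add_mul, mul_sub, mul_sub, h4]
    abel
  rw [e]
  have h1 : (f * (x * z) * f).re = -((x * z).re) := by
    rw [re_mul_comm, ← mul_assoc, hf, neg_one_mul, Quaternion.re_neg]
  have h2 : (f * x * g * z).re = (x * (g * (z * f))).re := by
    rw [show f * x * g * z = f * (x * (g * z)) by simp [mul_assoc],
      re_mul_comm, show x * (g * z) * f = x * (g * (z * f)) by simp [mul_assoc]]
  simp only [Quaternion.re_add, Quaternion.re_sub, h1, h2]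
  ring

private lemma half_smul (a : ℍ[ℝ]) : a / 2 = (2⁻¹ : ℝ) • a := by
  rw [div_eq_mul_inv, show ((2:ℍ[ℝ])) = (((2:ℝ)) : ℍ[ℝ]) by norm_cast, ← Quaternion.coe_inv,
    Quaternion.mul_coe_eq_smul]

private lemma re_div_mul (a b : ℍ[ℝ]) :
    ((a / 2) * star (b / 2)).re = (2⁻¹ * 2⁻¹) * (a * star b).re := by
  rw [half_smul, half_smul, Quaternion.star_smul, smul_mul_assoc, mul_smul_comm, smul_smul]
  simp [mul_assoc]

theorem quaternion_pm_split_orthogonality (f g : ℍ[ℝ]) (hf : f ^ 2 = -1) (hg : g ^ 2 = -1)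
    (hfre : f.re = 0) (hgre : g.re = 0) (x y : ℍ[ℝ]) :
    (((x + f * x * g) / 2) * star ((y - f * y * g) / 2)).re = 0 ∧
    (((x - f * x * g) / 2) * star ((y + f * y * g) / 2)).re = 0 := by
  have hf2 : f * f = -1 := by rw [← sq]; exact hf
  have hg2 : g * g = -1 := by rw [← sq]; exact hg
  have hsf : star f = -f := by ext <;> simp [hfre]
  have hsg : star g = -g := by ext <;> simp [hgre]
  constructor
  · rw [re_div_mul, key f g hf2 hg2 hsf hsg x y, mul_zero]
  · have hg2' : (-g) * (-g) = -1 := by simpa using hg2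
    have hsg' : star (-g) = -(-g) := by rw [star_neg, hsg]
    have := key f (-g) hf2 hg2' hsf hsg' x y
    simp only [mul_neg, neg_neg, ← sub_eq_add_neg, sub_neg_eq_add] at this
    rw [re_div_mul, this, mul_zero]
end

section
/- Let f, g be quaternions with f² = g² = −1 and let α, β ∈ ℝ. For any quaternion x with split parts x± = ½(x ± f x g), the general identity exp(αf) · x± · exp(βg) = x± · exp((β ∓ α)g) = exp((α ∓ β)f) · x± holds, where exp is the quaternion exponential. -/
open Quaternion

lemma aux_re_eq_zero (f : ℍ[ℝ]) (hf : f ^ 2 = -1) : f.re = 0 := by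
  rw [sq, Quaternion.ext_iff] at hf
  obtain ⟨h1, h2, h3, h4⟩ := hf
  simp [Quaternion.re_mul, Quaternion.imI_mul, Quaternion.imJ_mul, Quaternion.imK_mul] at h1 h2 h3 h4
  by_contra h
  have hi : f.imI = 0 := by
    have h' : f.re * f.imI = 0 := by linarith
    rcases mul_eq_zero.mp h' with h' | h'
    · exact absurd h' h
    · exact h'
  have hj : f.imJ = 0 := by
    have h' : f.re * f.imJ = 0 := by linarith
    rcases mul_eq_zero.mp h' with h' | h'
    · exact absurd h' h
    · exact h'
  have hk : f.imK = 0 := by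
    have h' : f.re * f.imK = 0 := by linarith
    rcases mul_eq_zero.mp h' with h' | h'
    · exact absurd h' h
    · exact h'
  rw [hi, hj, hk] at h1
  nlinarith [mul_self_nonneg f.re]

lemma aux_norm_eq_one (f : ℍ[ℝ]) (hf : f ^ 2 = -1) : ‖f‖ = 1 := by
  have hre := aux_re_eq_zero f hf
  have h : Quaternion.normSq f = 1 := by
    rw [sq, Quaternion.ext_iff] at hf
    obtain ⟨h1, -, -, -⟩ := hf
    simp [Quaternion.re_mul] at h1
    rw [Quaternion.normSq_def']
    nlinarith
  have h2 : ‖f‖ * ‖f‖ = 1 := by rw [← Quaternion.normSq_eq_norm_mul_self, h]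
  rcases mul_self_eq_one_iff.mp h2 with h | h
  · exact h
  · nlinarith [norm_nonneg f]

lemma aux_exp_smul (f : ℍ[ℝ]) (hf : f ^ 2 = -1) (t : ℝ) :
    NormedSpace.exp (t • f) = ↑(Real.cos t) + Real.sin t • f := by
  have hre : (t • f).re = 0 := by simp [aux_re_eq_zero f hf]
  have hnorm : ‖t • f‖ = |t| := by
    rw [norm_smul, aux_norm_eq_one f hf, Real.norm_eq_abs, mul_one]
  rw [Quaternion.exp_of_re_eq_zero _ hre, hnorm, Real.cos_abs, smul_smul]
  congr 2
  rcases lt_trichotomy t 0 with h | rfl | h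
  · rw [abs_of_neg h, Real.sin_neg, neg_div_neg_eq, div_mul_cancel₀ _ h.ne]
  · simp
  · rw [abs_of_pos h, div_mul_cancel₀ _ h.ne']

lemma aux_half (f y g : ℍ[ℝ]) (h : f * y = y * g) : f * (y / 2) = (y / 2) * g := by
  have c2 : Commute (2 : ℍ[ℝ]) g := by
    unfold Commute SemiconjBy
    rw [two_mul, mul_two]
  have hcg := c2.inv_left₀.eq
  rw [div_eq_mul_inv, ← mul_assoc, h, mul_assoc, ← hcg, ← mul_assoc]

lemma aux_key (f g : ℍ[ℝ]) (hf : f ^ 2 = -1) (hg : g ^ 2 = -1) (y : ℍ[ℝ])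
    (hy : f * y = y * g) (t : ℝ) :
    NormedSpace.exp (t • f) * y = y * NormedSpace.exp (t • g) := by
  rw [aux_exp_smul f hf, aux_exp_smul g hg, add_mul, mul_add, smul_mul_assoc, mul_smul_comm,
    hy, Quaternion.coe_commutes]

theorem quaternion_pm_split_exp_identity (f g : ℍ[ℝ]) (hf : f ^ 2 = -1) (hg : g ^ 2 = -1)
    (α β : ℝ) (x : ℍ[ℝ]) :
    (NormedSpace.exp (α • f) * ((x + f * x * g) / 2) * NormedSpace.exp (β • g) =
        ((x + f * x * g) / 2) * NormedSpace.exp ((β - α) • g) ∧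
      NormedSpace.exp (α • f) * ((x + f * x * g) / 2) * NormedSpace.exp (β • g) =
        NormedSpace.exp ((α - β) • f) * ((x + f * x * g) / 2)) ∧
    (NormedSpace.exp (α • f) * ((x - f * x * g) / 2) * NormedSpace.exp (β • g) =
        ((x - f * x * g) / 2) * NormedSpace.exp ((β + α) • g) ∧
      NormedSpace.exp (α • f) * ((x - f * x * g) / 2) * NormedSpace.exp (β • g) =
        NormedSpace.exp ((α + β) • f) * ((x - f * x * g) / 2)) := by
  letI : NormedAlgebra ℚ ℍ[ℝ] := .restrictScalars ℚ ℝ ℍ[ℝ]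
  have hf2 : f * f = -1 := by rw [← sq]; exact hf
  have hg2 : g * g = -1 := by rw [← sq]; exact hg
  have hfn : (-f) ^ 2 = -1 := by rw [neg_sq]; exact hf
  have hgn : (-g) ^ 2 = -1 := by rw [neg_sq]; exact hg
  set A : ℍ[ℝ] := (x + f * x * g) / 2 with hA
  set B : ℍ[ℝ] := (x - f * x * g) / 2 with hB
  have hpA : f * A = A * (-g) := by
    rw [hA]
    apply aux_half
    calc f * (x + f * x * g) = f * x + f * f * (x * g) := by noncomm_ring
      _ = f * x - x * g := by rw [hf2]; noncomm_ring
      _ = -(x * g) - f * x * (g * g) := by rw [hg2]; noncomm_ring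
      _ = (x + f * x * g) * (-g) := by noncomm_ring
  have hpA' : (-f) * A = A * g := by
    rw [neg_mul, hpA, mul_neg, neg_neg]
  have hmB : f * B = B * g := by
    rw [hB]
    apply aux_half
    calc f * (x - f * x * g) = f * x - f * f * (x * g) := by noncomm_ring
      _ = f * x + x * g := by rw [hf2]; noncomm_ring
      _ = x * g - f * x * (g * g) := by rw [hg2]; noncomm_ring
      _ = (x - f * x * g) * g := by noncomm_ring
  have comm : ∀ (u : ℍ[ℝ]) (s t : ℝ), Commute (s • u) (t • u) :=
    fun u s t => ((Commute.refl u).smul_left s).smul_right t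
  refine ⟨⟨?_, ?_⟩, ?_, ?_⟩
  · rw [aux_key f (-g) hf hgn A hpA α, smul_neg, ← neg_smul, mul_assoc,
      ← NormedSpace.exp_add_of_commute (comm g (-α) β), ← add_smul, neg_add_eq_sub]
  · have e2 := aux_key (-f) g hfn hg A hpA' β
    rw [mul_assoc, ← e2, smul_neg, ← neg_smul, ← mul_assoc,
      ← NormedSpace.exp_add_of_commute (comm f α (-β)), ← add_smul, ← sub_eq_add_neg]
  · rw [aux_key f g hf hg B hmB α, mul_assoc,
      ← NormedSpace.exp_add_of_commute (comm g α β), ← add_smul, add_comm]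
  · have e4 := aux_key f g hf hg B hmB β
    rw [mul_assoc, ← e4, ← mul_assoc,
      ← NormedSpace.exp_add_of_commute (comm f α β), ← add_smul]
end

section
/- Let f, g be pure (real part zero) quaternions with f² = g² = −1. For every quaternion x with split parts x± = ½(x ± f x g), the Pythagorean modulus identity |x|² = |x₊|² + |x₋|² holds, where |·| is the quaternion norm. -/
open Quaternion

theorem quaternion_pm_split_pythagorean (f g : ℍ[ℝ]) (hf : f ^ 2 = -1) (hg : g ^ 2 = -1)
    (hfre : f.re = 0) (hgre : g.re = 0) (x : ℍ[ℝ]) :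
    ‖x‖ ^ 2 = ‖(x + f * x * g) / 2‖ ^ 2 + ‖(x - f * x * g) / 2‖ ^ 2 := by
  have hnf : ‖f‖ = 1 := by
    have : ‖f‖ ^ 2 = 1 := by
      rw [← norm_pow, hf]; simp
    nlinarith [norm_nonneg f]
  have hng : ‖g‖ = 1 := by
    have : ‖g‖ ^ 2 = 1 := by
      rw [← norm_pow, hg]; simp
    nlinarith [norm_nonneg g]
  have h2 : ‖(2:ℍ[ℝ])‖ = 2 := by
    rw [show (2:ℍ[ℝ]) = ((2:ℝ):ℍ[ℝ]) by norm_cast, Quaternion.norm_coe]; norm_num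
  have hfxg : ‖f * x * g‖ = ‖x‖ := by
    rw [norm_mul, norm_mul, hnf, hng]; ring
  have hpar := parallelogram_law_with_norm ℝ x (f * x * g)
  have hd : ∀ y : ℍ[ℝ], ‖y / 2‖ = ‖y‖ / 2 := by
    intro y; rw [norm_div, h2]
  rw [hd, hd, div_pow, div_pow]
  rw [hfxg] at hpar
  nlinarith [hpar]
end

section
/- Let f, g be quaternions with f² = g² = −1, let h : (0,∞) × ℝ → ℍ be 2π-periodic in its second argument and integrable over (0,∞) × (0,2π) with respect to dθ dr/r, let a > 0 and 0 ≤ φ ≤ 2π, and set m(r,θ) = h(ar, θ + φ). Then for all v ∈ ℝ and k ∈ ℤ: M{m}(v,k) = exp(f v ln a) · M{h}(v,k) · exp(g k φ). -/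
open Quaternion MeasureTheory Real

/-- The measure `dθ dr/r` on `(0,∞) × (0,2π) ⊆ ℝ × ℝ`, first coordinate `r`,
second coordinate `θ`. -/
noncomputable def mellinMeasure : Measure (ℝ × ℝ) :=
  ((volume.restrict (Set.Ioi (0 : ℝ))).withDensity fun r => ENNReal.ofReal r⁻¹).prod
    (volume.restrict (Set.Ioo (0 : ℝ) (2 * π)))

/-- The Clifford Fourier–Mellin transform of a quaternion-valued signal. -/
noncomputable def CFMT (f g : ℍ[ℝ]) (h : ℝ × ℝ → ℍ[ℝ]) (v : ℝ) (k : ℤ) : ℍ[ℝ] :=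
  (2 * π)⁻¹ •
    ∫ p, NormedSpace.exp ((-(v * Real.log p.1)) • f) * h p *
      NormedSpace.exp ((-((k : ℝ) * p.2)) • g) ∂mellinMeasure

namespace CFMTAux

open Set

lemma re_eq_zero_of_sq (f : ℍ[ℝ]) (hf : f ^ 2 = -1) : f.re = 0 := by
  rw [pow_two] at hf
  have h1 := congrArg QuaternionAlgebra.re hf
  have h2 := congrArg QuaternionAlgebra.imI hf
  have h3 := congrArg QuaternionAlgebra.imJ hf
  have h4 := congrArg QuaternionAlgebra.imK hf
  simp [Quaternion.re_mul, Quaternion.imI_mul, Quaternion.imJ_mul, Quaternion.imK_mul]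
    at h1 h2 h3 h4
  nlinarith [sq_nonneg f.re, sq_nonneg f.imI, sq_nonneg f.imJ, sq_nonneg f.imK]

lemma norm_exp_smul (f : ℍ[ℝ]) (hf : f ^ 2 = -1) (t : ℝ) :
    ‖NormedSpace.exp (t • f)‖ = 1 := by
  rw [Quaternion.norm_exp]
  simp [re_eq_zero_of_sq f hf]

lemma exp_add_smul (f : ℍ[ℝ]) (s t : ℝ) :
    NormedSpace.exp ((s + t) • f) = NormedSpace.exp (s • f) * NormedSpace.exp (t • f) := by
  rw [add_smul]
  let +nondep : NormedAlgebra ℚ ℍ := .restrictScalars ℚ ℝ ℍ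
  exact NormedSpace.exp_add_of_commute (((Commute.refl f).smul_left s).smul_right t)

lemma exp_two_pi_int_smul (g : ℍ[ℝ]) (hg : g ^ 2 = -1) (k : ℤ) :
    NormedSpace.exp ((2 * π * k) • g) = 1 := by
  have hg' : g * g = -1 := by rw [← pow_two]; exact hg
  set L := Complex.liftAux g hg' with hL
  have hcont : Continuous L := L.toLinearMap.continuous_of_finiteDimensional
  have key : ((2 * π * k : ℝ)) • g = L (((2 * π * k : ℝ)) • Complex.I) := by
    rw [hL, Complex.liftAux_apply]
    simp
  rw [key, ← NormedSpace.map_exp L hcont]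
  have h2 : NormedSpace.exp (((2 * π * k : ℝ)) • Complex.I) = 1 := by
    rw [← Complex.exp_eq_exp_ℂ]
    have h3 : ((2 * π * k : ℝ)) • Complex.I = (k : ℂ) * (2 * π * Complex.I) := by
      rw [Complex.real_smul]
      push_cast
      ring
    rw [h3, Complex.exp_int_mul_two_pi_mul_I]
  rw [h2, map_one]

lemma map_mul_left_haar (a : ℝ) (ha : 0 < a) :
    Measure.map (fun r => a * r)
      ((volume.restrict (Set.Ioi (0 : ℝ))).withDensity fun r => ENNReal.ofReal r⁻¹) =
      (volume.restrict (Set.Ioi (0 : ℝ))).withDensity fun r => ENNReal.ofReal r⁻¹ := by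
  have hma : Measurable fun r : ℝ => a * r := measurable_const_mul a
  have hd : Measurable fun r : ℝ => ENNReal.ofReal r⁻¹ :=
    (measurable_inv).ennreal_ofReal
  refine Measure.ext fun s hs => ?_
  rw [Measure.map_apply hma hs, withDensity_apply _ (hma hs), withDensity_apply _ hs,
    Measure.restrict_restrict (hma hs), Measure.restrict_restrict hs]
  have hpre : (fun r : ℝ => a * r) ⁻¹' s ∩ Ioi 0 = (fun r : ℝ => a * r) ⁻¹' (s ∩ Ioi 0) := by
    rw [Set.preimage_inter]
    congr 1
    ext x
    simp [mul_pos_iff_of_pos_left, ha]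
  rw [hpre]
  have hptw : ∀ x : ℝ, ENNReal.ofReal x⁻¹ = ENNReal.ofReal a * ENNReal.ofReal (a * x)⁻¹ := by
    intro x
    rw [← ENNReal.ofReal_mul ha.le]
    congr 1
    rw [mul_inv, ← mul_assoc, mul_inv_cancel₀ ha.ne', one_mul]
  calc ∫⁻ x in (fun r : ℝ => a * r) ⁻¹' (s ∩ Ioi 0), ENNReal.ofReal x⁻¹ ∂volume
      = ∫⁻ x in (fun r : ℝ => a * r) ⁻¹' (s ∩ Ioi 0),
          ENNReal.ofReal a * ENNReal.ofReal (a * x)⁻¹ ∂volume := by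
        simp_rw [← hptw]
    _ = ENNReal.ofReal a * ∫⁻ x in (fun r : ℝ => a * r) ⁻¹' (s ∩ Ioi 0),
          ENNReal.ofReal (a * x)⁻¹ ∂volume := lintegral_const_mul' _ _ ENNReal.ofReal_ne_top
    _ = ENNReal.ofReal a * ∫⁻ y in s ∩ Ioi 0, ENNReal.ofReal y⁻¹
          ∂(Measure.map (fun r : ℝ => a * r) volume) := by
        rw [setLIntegral_map (hs.inter measurableSet_Ioi) hd hma]
    _ = ∫⁻ y in s ∩ Ioi 0, ENNReal.ofReal y⁻¹ ∂volume := by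
        rw [Real.map_volume_mul_left ha.ne', Measure.restrict_smul, lintegral_smul_measure,
          smul_eq_mul, ← mul_assoc, abs_of_pos (inv_pos.2 ha), ← ENNReal.ofReal_mul ha.le,
          mul_inv_cancel₀ ha.ne', ENNReal.ofReal_one, one_mul]

lemma map_rot (φ : ℝ) (hφ0 : 0 ≤ φ) (hφ2 : φ ≤ 2 * π) :
    Measure.map (fun θ : ℝ => if θ + φ < 2 * π then θ + φ else θ + φ - 2 * π)
      (volume.restrict (Ioo (0:ℝ) (2 * π))) = volume.restrict (Ioo (0:ℝ) (2 * π)) := by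
  set σ := fun θ : ℝ => if θ + φ < 2 * π then θ + φ else θ + φ - 2 * π with hσ
  have hmσ : Measurable σ := by
    apply Measurable.ite _ (by fun_prop) (by fun_prop)
    exact measurableSet_lt (by fun_prop) measurable_const
  set c := 2 * π - φ with hc
  have hc0 : 0 ≤ c := by simp [hc]; linarith
  have hc2 : c ≤ 2 * π := by simp [hc]; linarith
  have hsplit : volume.restrict (Ioo (0:ℝ) (2 * π)) =
      volume.restrict (Ioo (0:ℝ) c) + volume.restrict (Ico c (2 * π)) := by
    rw [← Measure.restrict_union (Set.disjoint_left.mpr fun x h1 h2 => absurd h1.2 (not_lt.2 h2.1))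
      measurableSet_Ico]
    apply Measure.restrict_congr_set
    rw [MeasureTheory.ae_eq_set]
    constructor
    · refine measure_mono_null (fun x hx => ?_) (measure_empty (μ := volume))
      obtain ⟨hx, hx2⟩ := hx
      exact absurd (by rcases lt_or_ge x c with h | h
                       · exact Or.inl ⟨hx.1, h⟩
                       · exact Or.inr ⟨h, hx.2⟩) hx2
    · refine measure_mono_null (fun x hx => ?_) Real.volume_singleton (t := {(0:ℝ)})
      obtain ⟨hx, hx2⟩ := hx
      rcases hx with ⟨h1, h2⟩ | ⟨h1, h2⟩
      · exact absurd ⟨h1, lt_of_lt_of_le h2 hc2⟩ hx2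
      · simp only [mem_singleton_iff]
        by_contra hne
        exact hx2 ⟨lt_of_le_of_ne (le_trans hc0 h1) (Ne.symm hne), h2⟩
  conv_lhs => rw [hsplit]
  rw [Measure.map_add _ _ hmσ]
  have h1 : Measure.map σ (volume.restrict (Ioo (0:ℝ) c)) = volume.restrict (Ioo φ (2 * π)) := by
    have hcong : σ =ᵐ[volume.restrict (Ioo (0:ℝ) c)] (fun θ => θ + φ) := by
      refine (ae_restrict_iff' measurableSet_Ioo).2 (ae_of_all _ fun θ hθ => ?_)
      simp only [hσ]
      rw [if_pos (by simp [hc] at hθ; linarith [hθ.2])]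
    rw [Measure.map_congr hcong]
    have key := Measure.restrict_map (μ := (volume : Measure ℝ)) (measurable_add_const φ)
      (s := Ioo φ (2 * π)) measurableSet_Ioo
    rw [map_add_right_eq_self volume φ, preimage_add_const_Ioo,
      show Ioo (φ - φ) (2 * π - φ) = Ioo 0 c by rw [hc]; norm_num] at key
    exact key.symm
  have h2 : Measure.map σ (volume.restrict (Ico c (2 * π))) = volume.restrict (Ico (0:ℝ) φ) := by
    have hcong : σ =ᵐ[volume.restrict (Ico c (2 * π))] (fun θ => θ + (φ - 2 * π)) := by
      refine (ae_restrict_iff' measurableSet_Ico).2 (ae_of_all _ fun θ hθ => ?_)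
      simp only [hσ]
      rw [if_neg (by simp [hc] at hθ; push_neg; linarith [hθ.1])]
      ring
    rw [Measure.map_congr hcong]
    have key := Measure.restrict_map (μ := (volume : Measure ℝ)) (measurable_add_const (φ - 2 * π))
      (s := Ico (0:ℝ) φ) measurableSet_Ico
    rw [map_add_right_eq_self volume (φ - 2 * π), preimage_add_const_Ico,
      show Ico (0 - (φ - 2 * π)) (φ - (φ - 2 * π)) = Ico c (2 * π) by
        rw [hc]; norm_num] at key
    exact key.symm
  rw [h1, h2]
  rw [add_comm, ← Measure.restrict_union
    (Set.disjoint_left.mpr fun x h1 h2 => absurd h2.1 (not_lt.2 h1.2.le)) measurableSet_Ioo]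
  apply Measure.restrict_congr_set
  rw [MeasureTheory.ae_eq_set]
  constructor
  · refine measure_mono_null (fun x hx => ?_) Real.volume_singleton (t := {(0:ℝ)})
    obtain ⟨hx, hx2⟩ := hx
    rcases hx with ⟨h1, h2⟩ | ⟨h1, h2⟩
    · simp only [mem_singleton_iff]
      by_contra hne
      exact hx2 ⟨lt_of_le_of_ne h1 (Ne.symm hne), lt_of_lt_of_le h2 hφ2⟩
    · exact absurd ⟨lt_of_le_of_lt hφ0 h1, h2⟩ hx2
  · refine measure_mono_null (fun x hx => ?_) Real.volume_singleton (t := {φ})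
    obtain ⟨hx, hx2⟩ := hx
    simp only [mem_singleton_iff]
    by_contra hne
    rcases lt_or_ge x φ with h | h
    · exact hx2 (Or.inl ⟨hx.1.le, h⟩)
    · exact hx2 (Or.inr ⟨lt_of_le_of_ne h (Ne.symm hne), hx.2⟩)

end CFMTAux

theorem cfmt_scaling_rotation (f g : ℍ[ℝ]) (hf : f ^ 2 = -1) (hg : g ^ 2 = -1)
    (h : ℝ × ℝ → ℍ[ℝ]) (hper : ∀ r θ : ℝ, h (r, θ + 2 * π) = h (r, θ))
    (hInt : Integrable h mellinMeasure)
    (a : ℝ) (ha : 0 < a) (φ : ℝ) (hφ : 0 ≤ φ ∧ φ ≤ 2 * π) (v : ℝ) (k : ℤ) :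
    CFMT f g (fun p => h (a * p.1, p.2 + φ)) v k =
      NormedSpace.exp ((v * Real.log a) • f) * CFMT f g h v k *
        NormedSpace.exp (((k : ℝ) * φ) • g) := by
  obtain ⟨hφ0, hφ2⟩ := hφ
  set A := NormedSpace.exp ((v * Real.log a) • f) with hA
  set B := NormedSpace.exp (((k : ℝ) * φ) • g) with hB
  set σ := fun θ : ℝ => if θ + φ < 2 * π then θ + φ else θ + φ - 2 * π with hσ
  have hmσ : Measurable σ := by
    apply Measurable.ite _ (by fun_prop) (by fun_prop)
    exact measurableSet_lt (by fun_prop) measurable_const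
  set G : ℝ × ℝ → ℍ[ℝ] := fun q =>
    NormedSpace.exp ((-(v * Real.log q.1)) • f) * h q *
      NormedSpace.exp ((-((k : ℝ) * q.2)) • g) with hG
  -- the transformation is measure preserving
  have hS : MeasurePreserving (Prod.map (fun r : ℝ => a * r) σ)
      mellinMeasure mellinMeasure := by
    rw [mellinMeasure]
    exact MeasurePreserving.prod
      ⟨measurable_const_mul a, CFMTAux.map_mul_left_haar a ha⟩
      ⟨hmσ, CFMTAux.map_rot φ hφ0 hφ2⟩
  -- measurability and integrability of G
  have hexpc : Continuous (NormedSpace.exp : ℍ[ℝ] → ℍ[ℝ]) := by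
    let +nondep : NormedAlgebra ℚ ℍ := .restrictScalars ℚ ℝ ℍ
    exact NormedSpace.exp_continuous
  have hm1 : StronglyMeasurable fun q : ℝ × ℝ => NormedSpace.exp ((-(v * Real.log q.1)) • f) :=
    hexpc.comp_stronglyMeasurable
      ((((Real.measurable_log.comp measurable_fst).const_mul v).neg.stronglyMeasurable).smul_const f)
  have hm2 : StronglyMeasurable fun q : ℝ × ℝ => NormedSpace.exp ((-((k : ℝ) * q.2)) • g) :=
    hexpc.comp_stronglyMeasurable
      (((measurable_snd.const_mul (k : ℝ)).neg.stronglyMeasurable).smul_const g)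
  have hGmeas : AEStronglyMeasurable G mellinMeasure :=
    (hm1.aestronglyMeasurable.mul hInt.1).mul hm2.aestronglyMeasurable
  have hGnorm : ∀ q, ‖G q‖ = ‖h q‖ := by
    intro q
    rw [hG]
    simp only [norm_mul, CFMTAux.norm_exp_smul f hf, CFMTAux.norm_exp_smul g hg,
      one_mul, mul_one]
  have hGint : Integrable G mellinMeasure :=
    hInt.norm.mono' hGmeas (Filter.Eventually.of_forall fun q => le_of_eq (hGnorm q))
  have hGSint : Integrable (fun p : ℝ × ℝ => G (a * p.1, σ p.2)) mellinMeasure :=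
    (hS.integrable_comp hGmeas).2 hGint
  have hGSeq : ∫ p, G (a * p.1, σ p.2) ∂mellinMeasure = ∫ q, G q ∂mellinMeasure := by
    calc ∫ p, G (a * p.1, σ p.2) ∂mellinMeasure
        = ∫ q, G q ∂(Measure.map (Prod.map (fun r : ℝ => a * r) σ) mellinMeasure) :=
          (integral_map hS.aemeasurable (by rw [hS.map_eq]; exact hGmeas)).symm
      _ = ∫ q, G q ∂mellinMeasure := by rw [hS.map_eq]
  -- the a.e. pointwise identity
  have hae0 : ∀ᵐ p : ℝ × ℝ ∂mellinMeasure, 0 < p.1 := by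
    rw [ae_iff]
    have hset : {p : ℝ × ℝ | ¬0 < p.1} = (Set.Iic (0:ℝ)) ×ˢ (Set.univ : Set ℝ) := by
      ext p; simp [not_lt]
    rw [hset, mellinMeasure, Measure.prod_prod]
    have : ((volume.restrict (Set.Ioi (0 : ℝ))).withDensity fun r => ENNReal.ofReal r⁻¹)
        (Set.Iic 0) = 0 := by
      rw [withDensity_apply _ measurableSet_Iic, Measure.restrict_restrict measurableSet_Iic]
      have : Set.Iic (0:ℝ) ∩ Set.Ioi 0 = ∅ := by
        ext x; simp
      rw [this]
      simp
    rw [this, zero_mul]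
  have hae : ∀ᵐ p : ℝ × ℝ ∂mellinMeasure,
      NormedSpace.exp ((-(v * Real.log p.1)) • f) * h (a * p.1, p.2 + φ) *
        NormedSpace.exp ((-((k : ℝ) * p.2)) • g) = A * G (a * p.1, σ p.2) * B := by
    filter_upwards [hae0] with p hp
    have hE1 : NormedSpace.exp ((-(v * Real.log p.1)) • f) =
        A * NormedSpace.exp ((-(v * Real.log (a * p.1))) • f) := by
      rw [hA, ← CFMTAux.exp_add_smul]
      congr 1
      rw [Real.log_mul ha.ne' hp.ne']
      ring
    have hh : h (a * p.1, p.2 + φ) = h (a * p.1, σ p.2) := by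
      by_cases hcase : p.2 + φ < 2 * π
      · have hσval : σ p.2 = p.2 + φ := by rw [hσ]; simp [hcase]
        rw [hσval]
      · have hσval : σ p.2 = p.2 + φ - 2 * π := by rw [hσ]; simp [hcase]
        rw [hσval, ← hper (a * p.1) (p.2 + φ - 2 * π), sub_add_cancel]
    have hE2 : NormedSpace.exp ((-((k : ℝ) * p.2)) • g) =
        NormedSpace.exp ((-((k : ℝ) * σ p.2)) • g) * B := by
      by_cases hcase : p.2 + φ < 2 * π
      · have hσval : σ p.2 = p.2 + φ := by rw [hσ]; simp [hcase]
        rw [hσval, hB, ← CFMTAux.exp_add_smul]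
        congr 1
        ring
      · have hσval : σ p.2 = p.2 + φ - 2 * π := by rw [hσ]; simp [hcase]
        rw [hσval, hB, ← CFMTAux.exp_add_smul]
        have hexp : -((k:ℝ) * (p.2 + φ - 2 * π)) + (k:ℝ) * φ =
            -((k:ℝ) * p.2) + 2 * π * k := by ring
        rw [hexp, CFMTAux.exp_add_smul, CFMTAux.exp_two_pi_int_smul g hg k, mul_one]
    rw [hE1, hh, hE2, hG]
    simp only [mul_assoc]
  -- pull the constants out of the integral
  set M : ℍ[ℝ] →L[ℝ] ℍ[ℝ] := ContinuousLinearMap.mulLeftRight ℝ ℍ[ℝ] A B with hM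
  have hMapply : ∀ x : ℍ[ℝ], M x = A * x * B := fun x =>
    ContinuousLinearMap.mulLeftRight_apply ℝ ℍ[ℝ] A B x
  have key : ∫ p, NormedSpace.exp ((-(v * Real.log p.1)) • f) * h (a * p.1, p.2 + φ) *
      NormedSpace.exp ((-((k : ℝ) * p.2)) • g) ∂mellinMeasure =
      A * (∫ q, G q ∂mellinMeasure) * B := by
    rw [integral_congr_ae hae]
    have : ∀ p : ℝ × ℝ, A * G (a * p.1, σ p.2) * B = M (G (a * p.1, σ p.2)) := fun p =>
      (hMapply _).symm
    simp_rw [this]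
    rw [ContinuousLinearMap.integral_comp_comm M hGSint, hGSeq, hMapply]
  show (2 * π)⁻¹ • ∫ p, NormedSpace.exp ((-(v * Real.log p.1)) • f) * h (a * p.1, p.2 + φ) *
      NormedSpace.exp ((-((k : ℝ) * p.2)) • g) ∂mellinMeasure = A * CFMT f g h v k * B
  rw [key, CFMT, mul_smul_comm, smul_mul_assoc]
end

section
/- Let f, g be pure (real part zero) quaternions with f² = g² = −1, let h : (0,∞) × ℝ → ℍ be 2π-periodic in its second argument and integrable over (0,∞) × (0,2π) with respect to dθ dr/r, let a > 0 and 0 ≤ φ ≤ 2π, and set m(r,θ) = h(ar, θ + φ). Then the magnitude of the Clifford Fourier–Mellin transform is invariant under this scaling and rotation: |M{m}(v,k)| = |M{h}(v,k)| for all v ∈ ℝ and k ∈ ℤ. -/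
open Quaternion MeasureTheory Real

lemma map_mul_haar {a : ℝ} (ha : 0 < a) :
    Measure.map (fun r => a * r)
      ((volume.restrict (Set.Ioi (0 : ℝ))).withDensity fun r => ENNReal.ofReal r⁻¹)
    = (volume.restrict (Set.Ioi (0 : ℝ))).withDensity fun r => ENNReal.ofReal r⁻¹ := by
  have hmeas : Measurable fun r : ℝ => a * r := measurable_const_mul a
  have hden : Measurable fun r : ℝ => ENNReal.ofReal r⁻¹ :=
    ENNReal.measurable_ofReal.comp measurable_inv
  have hres : Measure.map (fun r => a * r) (volume.restrict (Set.Ioi (0:ℝ)))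
      = (ENNReal.ofReal a⁻¹) • volume.restrict (Set.Ioi (0:ℝ)) := by
    have hpre : (fun r : ℝ => a * r) ⁻¹' (Set.Ioi 0) = Set.Ioi 0 := by
      ext x; simp [mul_pos_iff_of_pos_left, ha]
    rw [← hpre, ← Measure.restrict_map hmeas measurableSet_Ioi,
      Real.map_volume_mul_left ha.ne', Measure.restrict_smul, abs_of_pos (inv_pos.mpr ha), hpre]
  have hback : volume.restrict (Set.Ioi (0:ℝ))
      = Measure.map (fun r => a * r) ((ENNReal.ofReal a) • volume.restrict (Set.Ioi (0:ℝ))) := by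
    rw [Measure.map_smul, hres, smul_smul, ← ENNReal.ofReal_mul ha.le,
      mul_inv_cancel₀ ha.ne', ENNReal.ofReal_one, one_smul]
  ext s hs
  rw [Measure.map_apply hmeas hs, withDensity_apply _ (hmeas hs), withDensity_apply _ hs]
  symm
  calc ∫⁻ r in s, ENNReal.ofReal r⁻¹ ∂(volume.restrict (Set.Ioi (0:ℝ)))
      = ∫⁻ r in s, ENNReal.ofReal r⁻¹
          ∂(Measure.map (fun r => a * r) ((ENNReal.ofReal a) • volume.restrict (Set.Ioi (0:ℝ)))) := by
        rw [← hback]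
    _ = ∫⁻ x in (fun r => a * r) ⁻¹' s, ENNReal.ofReal (a * x)⁻¹
          ∂((ENNReal.ofReal a) • volume.restrict (Set.Ioi (0:ℝ))) := by
        rw [setLIntegral_map hs hden hmeas]
    _ = ∫⁻ x in (fun r => a * r) ⁻¹' s, ENNReal.ofReal a * ENNReal.ofReal (a * x)⁻¹
          ∂(volume.restrict (Set.Ioi (0:ℝ))) := by
        rw [Measure.restrict_smul, lintegral_smul_measure, smul_eq_mul,
          ← lintegral_const_mul' _ _ ENNReal.ofReal_ne_top]
    _ = ∫⁻ x in (fun r => a * r) ⁻¹' s, ENNReal.ofReal x⁻¹ ∂(volume.restrict (Set.Ioi (0:ℝ))) := by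
        refine lintegral_congr fun x => ?_
        rw [← ENNReal.ofReal_mul ha.le, mul_inv, ← mul_assoc, mul_inv_cancel₀ ha.ne', one_mul]

lemma map_rot {φ : ℝ} (hφ0 : 0 ≤ φ) (hφ2 : φ ≤ 2 * π) :
    Measure.map (fun ψ : ℝ => if ψ ≤ 2 * π - φ then ψ + φ else ψ + φ - 2 * π)
      (volume.restrict (Set.Ioo (0:ℝ) (2 * π)))
    = volume.restrict (Set.Ioo (0:ℝ) (2 * π)) := by
  set m : ℝ := 2 * π - φ with hm
  set S : ℝ → ℝ := fun ψ : ℝ => if ψ ≤ m then ψ + φ else ψ + φ - 2 * π with hS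
  have hSm : Measurable S := by
    refine Measurable.ite (measurableSet_le measurable_id measurable_const) ?_ ?_
    · exact measurable_id.add_const φ
    · exact (measurable_id.add_const φ).sub_const (2 * π)
  have hm0 : 0 ≤ m := by simp [hm]; linarith
  have hm2 : m ≤ 2 * π := by simp [hm]; linarith
  have hsplit : volume.restrict (Set.Ioo (0:ℝ) (2 * π))
      = volume.restrict (Set.Ioc (0:ℝ) m) + volume.restrict (Set.Ioc m (2 * π)) := by
    rw [Measure.restrict_congr_set Ioo_ae_eq_Ioc,
      ← Set.Ioc_union_Ioc_eq_Ioc hm0 hm2,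
      Measure.restrict_union (Set.Ioc_disjoint_Ioc_of_le le_rfl) measurableSet_Ioc]
  have h1 : Measure.map S (volume.restrict (Set.Ioc (0:ℝ) m))
      = volume.restrict (Set.Ioc φ (2 * π)) := by
    have heq : Measure.map S (volume.restrict (Set.Ioc (0:ℝ) m))
        = Measure.map (fun ψ => ψ + φ) (volume.restrict (Set.Ioc (0:ℝ) m)) := by
      refine Measure.map_congr ?_
      filter_upwards [ae_restrict_mem measurableSet_Ioc] with x hx
      exact if_pos hx.2
    rw [heq]
    have hpre : (fun ψ : ℝ => ψ + φ) ⁻¹' (Set.Ioc φ (2 * π)) = Set.Ioc 0 m := by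
      rw [Set.preimage_add_const_Ioc]; congr 1 <;> ring
    rw [← hpre, ← Measure.restrict_map (measurable_add_const φ) measurableSet_Ioc,
      (measurePreserving_add_right volume φ).map_eq]
  have h2 : Measure.map S (volume.restrict (Set.Ioc m (2 * π)))
      = volume.restrict (Set.Ioc (0:ℝ) φ) := by
    have heq : Measure.map S (volume.restrict (Set.Ioc m (2 * π)))
        = Measure.map (fun ψ => ψ + (φ - 2 * π)) (volume.restrict (Set.Ioc m (2 * π))) := by
      refine Measure.map_congr ?_
      filter_upwards [ae_restrict_mem measurableSet_Ioc] with x hx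
      have hx' : ¬ x ≤ m := not_le.2 hx.1
      simp only [hS, if_neg hx']; ring
    rw [heq]
    have hpre : (fun ψ : ℝ => ψ + (φ - 2 * π)) ⁻¹' (Set.Ioc 0 φ) = Set.Ioc m (2 * π) := by
      rw [Set.preimage_add_const_Ioc]; congr 1 <;> (simp [hm]; try ring)
    rw [← hpre, ← Measure.restrict_map (measurable_add_const (φ - 2 * π)) measurableSet_Ioc,
      (measurePreserving_add_right volume (φ - 2 * π)).map_eq]
  have hmap : Measure.map S (volume.restrict (Set.Ioo (0:ℝ) (2 * π)))
      = volume.restrict (Set.Ioc φ (2 * π)) + volume.restrict (Set.Ioc (0:ℝ) φ) := by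
    rw [hsplit, Measure.map_add _ _ hSm, h1, h2]
  rw [hmap, add_comm,
    ← Measure.restrict_union (Set.Ioc_disjoint_Ioc_of_le le_rfl) measurableSet_Ioc,
    Set.Ioc_union_Ioc_eq_Ioc hφ0 hφ2]
  exact (Measure.restrict_congr_set Ioo_ae_eq_Ioc).symm

lemma norm_exp_smul (q : ℍ[ℝ]) (hq : q.re = 0) (t : ℝ) :
    ‖NormedSpace.exp (t • q)‖ = 1 := by
  rw [Quaternion.norm_exp]
  simp [Quaternion.re_smul, hq]

lemma norm_eq_one_of_sq {g : ℍ[ℝ]} (hg : g ^ 2 = -1) (hgre : g.re = 0) : ‖g‖ = 1 := by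
  have h1 : -(((Quaternion.normSq g : ℝ)) : ℍ[ℝ]) = -1 := by
    rw [← Quaternion.sq_eq_neg_normSq.mpr hgre, hg]
  have h2 : (((Quaternion.normSq g : ℝ)) : ℍ[ℝ]) = ((1 : ℝ) : ℍ[ℝ]) := by
    rw [← neg_inj]; simpa using h1
  have h3 : Quaternion.normSq g = 1 := by
    have := congrArg QuaternionAlgebra.re h2
    simpa using this
  have h4 : ‖g‖ * ‖g‖ = 1 := by rw [← Quaternion.normSq_eq_norm_mul_self, h3]
  rcases mul_self_eq_one_iff.mp h4 with h | h
  · exact h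
  · nlinarith [norm_nonneg g]

lemma exp_two_pi_int_smul {g : ℍ[ℝ]} (hgre : g.re = 0) (hgn : ‖g‖ = 1) (n : ℤ) :
    NormedSpace.exp (((n : ℝ) * (2 * π)) • g) = 1 := by
  have hre : (((n : ℝ) * (2 * π)) • g).re = 0 := by simp [Quaternion.re_smul, hgre]
  rw [Quaternion.exp_of_re_eq_zero _ hre]
  have hnorm : ‖((n : ℝ) * (2 * π)) • g‖ = ((|n| : ℤ) : ℝ) * (2 * π) := by
    rw [norm_smul, hgn, mul_one, Real.norm_eq_abs, abs_mul,
      abs_of_pos (by positivity : (0:ℝ) < 2 * π), Int.cast_abs]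
  have hcos : Real.cos (((|n| : ℤ) : ℝ) * (2 * π)) = 1 := Real.cos_int_mul_two_pi _
  have hsin : Real.sin (((|n| : ℤ) : ℝ) * (2 * π)) = 0 := by
    rw [show ((|n| : ℤ) : ℝ) * (2 * π) = ((2 * |n| : ℤ) : ℝ) * π by push_cast; ring]
    exact Real.sin_int_mul_pi _
  rw [hnorm, hcos, hsin, zero_div, zero_smul, add_zero]
  norm_num

theorem cfmt_magnitude_invariance (f g : ℍ[ℝ]) (hf : f ^ 2 = -1) (hg : g ^ 2 = -1)
    (hfre : f.re = 0) (hgre : g.re = 0)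
    (h : ℝ × ℝ → ℍ[ℝ]) (hper : ∀ r θ : ℝ, h (r, θ + 2 * π) = h (r, θ))
    (hInt : Integrable h mellinMeasure)
    (a : ℝ) (ha : 0 < a) (φ : ℝ) (hφ : 0 ≤ φ ∧ φ ≤ 2 * π) (v : ℝ) (k : ℤ) :
    ‖CFMT f g (fun p => h (a * p.1, p.2 + φ)) v k‖ = ‖CFMT f g h v k‖ := by
  obtain ⟨hφ0, hφ2⟩ := hφ
  let +nondep : NormedAlgebra ℚ ℍ := .restrictScalars ℚ ℝ ℍ
  have hgn : ‖g‖ = 1 := norm_eq_one_of_sq hg hgre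
  -- the rearrangement map
  set S : ℝ → ℝ := fun ψ => if ψ ≤ 2 * π - φ then ψ + φ else ψ + φ - 2 * π with hSdef
  have hSm : Measurable S := by
    refine Measurable.ite (measurableSet_le measurable_id measurable_const) ?_ ?_
    · exact measurable_id.add_const φ
    · exact (measurable_id.add_const φ).sub_const (2 * π)
  set U : ℝ × ℝ → ℝ × ℝ := Prod.map (fun r => a * r) S with hUdef
  have hUm : Measurable U := (measurable_const_mul a).prodMap hSm
  have hmapU : Measure.map U mellinMeasure = mellinMeasure := by
    rw [mellinMeasure, ← Measure.map_prod_map _ _ (measurable_const_mul a) hSm,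
      map_mul_haar ha, map_rot hφ0 hφ2]
  -- the integrand of `CFMT f g h v k`
  set G : ℝ × ℝ → ℍ[ℝ] := fun p =>
    NormedSpace.exp ((-(v * Real.log p.1)) • f) * h p *
      NormedSpace.exp ((-((k : ℝ) * p.2)) • g) with hGdef
  set c1 : ℍ[ℝ] := NormedSpace.exp ((v * Real.log a) • f) with hc1def
  set c2 : ℍ[ℝ] := NormedSpace.exp (((k : ℝ) * φ) • g) with hc2def
  -- measurability and integrability of G
  have m1 : AEStronglyMeasurable
      (fun p : ℝ × ℝ => NormedSpace.exp ((-(v * Real.log p.1)) • f)) mellinMeasure := by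
    refine NormedSpace.exp_continuous.comp_aestronglyMeasurable ?_
    exact ((((Real.measurable_log.comp measurable_fst).const_mul v).neg).stronglyMeasurable.smul_const
      f).aestronglyMeasurable
  have m2 : AEStronglyMeasurable
      (fun p : ℝ × ℝ => NormedSpace.exp ((-((k : ℝ) * p.2)) • g)) mellinMeasure := by
    refine NormedSpace.exp_continuous.comp_aestronglyMeasurable ?_
    exact (((measurable_snd.const_mul ((k : ℝ))).neg).stronglyMeasurable.smul_const
      g).aestronglyMeasurable
  have hGsm : AEStronglyMeasurable G mellinMeasure :=
    (m1.mul hInt.aestronglyMeasurable).mul m2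
  have hGnorm : ∀ p : ℝ × ℝ, ‖G p‖ = ‖h p‖ := by
    intro p
    rw [hGdef]
    simp only [norm_mul, norm_exp_smul f hfre, norm_exp_smul g hgre, one_mul, mul_one]
  have hGint : Integrable G mellinMeasure :=
    hInt.norm.mono' hGsm (Filter.Eventually.of_forall fun p => le_of_eq (hGnorm p))
  -- periodicity of G in the second variable
  have hGper : ∀ s ψ : ℝ, G (s, ψ + 2 * π) = G (s, ψ) := by
    intro s ψ
    rw [hGdef]
    simp only [hper]
    congr 1
    have hsplit : (-((k : ℝ) * (ψ + 2 * π))) • g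
        = (-((k : ℝ) * ψ)) • g + (((-k : ℤ) : ℝ) * (2 * π)) • g := by
      rw [← add_smul]; push_cast; ring_nf
    rw [hsplit, NormedSpace.exp_add_of_commute (((Commute.refl g).smul_left _).smul_right _),
      exp_two_pi_int_smul hgre hgn (-k), mul_one]
  -- a.e. positivity of the first coordinate
  have hae : ∀ᵐ p : ℝ × ℝ ∂mellinMeasure, 0 < p.1 := by
    rw [ae_iff]
    have hsub : {p : ℝ × ℝ | ¬ 0 < p.1} ⊆ (Set.Iic (0:ℝ)) ×ˢ (Set.univ : Set ℝ) := by
      intro p hp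
      exact ⟨not_lt.mp hp, Set.mem_univ _⟩
    refine measure_mono_null hsub ?_
    rw [mellinMeasure, Measure.prod_prod]
    have : ((volume.restrict (Set.Ioi (0 : ℝ))).withDensity fun r => ENNReal.ofReal r⁻¹)
        (Set.Iic 0) = 0 := by
      rw [withDensity_apply _ measurableSet_Iic, Measure.restrict_restrict measurableSet_Iic]
      have : Set.Iic (0:ℝ) ∩ Set.Ioi 0 = ∅ := by
        ext x; simp
      rw [this, Measure.restrict_empty, lintegral_zero_measure]
    rw [this, zero_mul]
  -- pointwise identity
  have hpt : ∀ p : ℝ × ℝ, 0 < p.1 →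
      NormedSpace.exp ((-(v * Real.log p.1)) • f) * h (a * p.1, p.2 + φ) *
        NormedSpace.exp ((-((k : ℝ) * p.2)) • g) = c1 * G (U p) * c2 := by
    rintro ⟨r, θ⟩ hr
    simp only at hr
    have hlog : Real.log (a * r) = Real.log a + Real.log r := Real.log_mul ha.ne' hr.ne'
    have e1 : c1 * NormedSpace.exp ((-(v * Real.log (a * r))) • f)
        = NormedSpace.exp ((-(v * Real.log r)) • f) := by
      rw [hc1def, ← NormedSpace.exp_add_of_commute (((Commute.refl f).smul_left _).smul_right _),
        ← add_smul, show v * Real.log a + -(v * Real.log (a * r)) = -(v * Real.log r) by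
          rw [hlog]; ring]
    have e2 : NormedSpace.exp ((-((k : ℝ) * (θ + φ))) • g) * c2
        = NormedSpace.exp ((-((k : ℝ) * θ)) • g) := by
      rw [hc2def, ← NormedSpace.exp_add_of_commute (((Commute.refl g).smul_left _).smul_right _),
        ← add_smul, show -((k : ℝ) * (θ + φ)) + (k : ℝ) * φ = -((k : ℝ) * θ) by ring]
    have hGU : G (U (r, θ)) = G (a * r, θ + φ) := by
      by_cases hθ : θ ≤ 2 * π - φ
      · simp only [hUdef, hSdef, Prod.map, if_pos hθ]
      · have h2π : θ + φ = (θ + φ - 2 * π) + 2 * π := by ring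
        rw [h2π, hGper]
        simp only [hUdef, hSdef, Prod.map, if_neg hθ]
    rw [hGU, hGdef]
    simp only
    rw [← e1, ← e2]
    simp only [mul_assoc]
  -- integrability of G ∘ U
  have hGsm' : AEStronglyMeasurable G (Measure.map U mellinMeasure) := by rw [hmapU]; exact hGsm
  have hGint' : Integrable G (Measure.map U mellinMeasure) := by rw [hmapU]; exact hGint
  have hGUint : Integrable (fun p => G (U p)) mellinMeasure :=
    (integrable_map_measure hGsm' hUm.aemeasurable).mp hGint'
  -- the change of variables
  have hcov : ∫ p, G (U p) ∂mellinMeasure = ∫ p, G p ∂mellinMeasure := by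
    conv_rhs => rw [← hmapU]
    rw [integral_map hUm.aemeasurable hGsm']
  -- pulling out the constants
  have hpull : ∫ p, c1 * G (U p) * c2 ∂mellinMeasure
      = c1 * (∫ p, G (U p) ∂mellinMeasure) * c2 := by
    let L : ℍ[ℝ] →L[ℝ] ℍ[ℝ] :=
      ((ContinuousLinearMap.mul ℝ ℍ[ℝ]) c1).comp (((ContinuousLinearMap.mul ℝ ℍ[ℝ]).flip) c2)
    have hL : ∀ x : ℍ[ℝ], L x = c1 * x * c2 := by
      intro x
      simp only [L, ContinuousLinearMap.coe_comp', Function.comp_apply,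
        ContinuousLinearMap.flip_apply, ContinuousLinearMap.mul_apply', mul_assoc]
    have := L.integral_comp_comm hGUint
    simp only [hL] at this
    exact this
  -- the main identity
  have hmain : CFMT f g (fun p => h (a * p.1, p.2 + φ)) v k = c1 * CFMT f g h v k * c2 := by
    have hCF2 : CFMT f g h v k = (2 * π)⁻¹ • ∫ p, G p ∂mellinMeasure := rfl
    have hCF1 : CFMT f g (fun p => h (a * p.1, p.2 + φ)) v k
        = (2 * π)⁻¹ • ∫ p, NormedSpace.exp ((-(v * Real.log p.1)) • f) * h (a * p.1, p.2 + φ) *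
            NormedSpace.exp ((-((k : ℝ) * p.2)) • g) ∂mellinMeasure := rfl
    rw [hCF1, hCF2]
    rw [integral_congr_ae (hae.mono fun p hp => hpt p hp), hpull, hcov,
      mul_smul_comm, smul_mul_assoc]
  rw [hmain, norm_mul, norm_mul, hc1def, hc2def, norm_exp_smul f hfre, norm_exp_smul g hgre,
    one_mul, mul_one]
end

section
/- Let f, g be quaternions with f² = g² = −1, let h : (0,∞) × ℝ → ℍ be 2π-periodic in its second argument and integrable over (0,∞) × (0,2π) with respect to dθ dr/r, and set m(r,θ) = h(r, −θ) (reversal of the sense of rotation). Then M{m}(v,k) = M{h}(v,−k) for all v ∈ ℝ and k ∈ ℤ. -/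
open Quaternion MeasureTheory Real

lemma exp_smul_periodic {g : ℍ[ℝ]} (hg : g ^ 2 = -1) (t : ℝ) (n : ℤ) :
    NormedSpace.exp ((t + 2 * π * n) • g) = NormedSpace.exp (t • g) := by
  have hg' : g * g = -1 := by rw [← sq]; exact hg
  set φ : ℂ →ₐ[ℝ] ℍ[ℝ] := Complex.liftAux g hg' with hφ
  have hφc : Continuous φ := φ.toLinearMap.continuous_of_finiteDimensional
  have key : ∀ s : ℝ, NormedSpace.exp (s • g) = φ (Complex.exp (s * Complex.I)) := by
    intro s
    have h1 : (s • g) = φ (s • Complex.I) := by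
      rw [_root_.map_smul, Complex.liftAux_apply_I]
    rw [h1, ← NormedSpace.map_exp φ hφc,
      ← Complex.exp_eq_exp_ℂ, Complex.real_smul]
  rw [key, key]
  congr 1
  push_cast
  rw [add_mul, Complex.exp_add]
  have : Complex.exp ((2 * π * n : ℂ) * Complex.I) = 1 := by
    have := Complex.exp_int_mul_two_pi_mul_I n
    rw [← this]; ring_nf
  rw [this, mul_one]

/-- The rotation-reversal map `(r, θ) ↦ (r, 2π − θ)` as a measurable equivalence. -/
noncomputable def reflEquiv : (ℝ × ℝ) ≃ᵐ (ℝ × ℝ) :=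
  (MeasurableEquiv.refl ℝ).prodCongr (MeasurableEquiv.subLeft (2 * π))

lemma reflEquiv_apply (p : ℝ × ℝ) : reflEquiv p = (p.1, 2 * π - p.2) := rfl

lemma refl_measurePreserving :
    MeasurePreserving (reflEquiv : ℝ × ℝ → ℝ × ℝ) mellinMeasure mellinMeasure := by
  have h2 : MeasurePreserving (fun θ : ℝ => 2 * π - θ) volume volume :=
    Measure.measurePreserving_sub_left volume (2 * π)
  have hpre : (fun θ : ℝ => 2 * π - θ) ⁻¹' Set.Ioo (0 : ℝ) (2 * π) =
      Set.Ioo (0 : ℝ) (2 * π) := by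
    ext x
    simp only [Set.mem_preimage, Set.mem_Ioo]
    constructor <;> rintro ⟨h1, h2⟩ <;> constructor <;> linarith
  have h2' : MeasurePreserving (fun θ : ℝ => 2 * π - θ)
      (volume.restrict (Set.Ioo (0 : ℝ) (2 * π)))
      (volume.restrict (Set.Ioo (0 : ℝ) (2 * π))) := by
    have := h2.restrict_preimage_emb (MeasurableEquiv.subLeft (2 * π)).measurableEmbedding
      (Set.Ioo (0 : ℝ) (2 * π))
    rwa [hpre] at this
  exact (MeasurePreserving.id _).prod h2'

theorem cfmt_rotation_reversal (f g : ℍ[ℝ]) (hf : f ^ 2 = -1) (hg : g ^ 2 = -1)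
    (h : ℝ × ℝ → ℍ[ℝ]) (hper : ∀ r θ : ℝ, h (r, θ + 2 * π) = h (r, θ))
    (hInt : Integrable h mellinMeasure) (v : ℝ) (k : ℤ) :
    CFMT f g (fun p => h (p.1, -p.2)) v k = CFMT f g h v (-k) := by
  unfold CFMT
  congr 1
  have := (refl_measurePreserving.integral_comp reflEquiv.measurableEmbedding
    (fun p : ℝ × ℝ => NormedSpace.exp ((-(v * Real.log p.1)) • f) * h (p.1, -p.2) *
      NormedSpace.exp ((-((k : ℝ) * p.2)) • g))).symm
  rw [this]
  refine integral_congr_ae (Filter.Eventually.of_forall fun p => ?_)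
  obtain ⟨r, θ⟩ := p
  simp only [reflEquiv_apply]
  have hh : h (r, -(2 * π - θ)) = h (r, θ) := by
    have := hper r (θ - 2 * π)
    rw [sub_add_cancel] at this
    rw [show -(2 * π - θ) = θ - 2 * π by ring]
    exact this.symm
  have hexp : NormedSpace.exp ((-((k : ℝ) * (2 * π - θ))) • g) =
      NormedSpace.exp ((-(((-k : ℤ) : ℝ) * θ)) • g) := by
    have := exp_smul_periodic hg ((k : ℝ) * θ) (-k)
    push_cast at this ⊢
    rw [show -((k:ℝ) * (2 * π - θ)) = (k:ℝ) * θ + 2 * π * (-(k:ℝ)) by ring,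
      show -(-(k:ℝ) * θ) = (k:ℝ) * θ by ring]
    exact this
  rw [hh, hexp]
end

section
/- Let f, g be quaternions with f² = g² = −1, let h : (0,∞) × (0,2π) → ℍ be integrable with respect to dθ dr/r, let v₀ ∈ ℝ and k₀ ∈ ℤ, and set m(r,θ) = exp(f v₀ ln r) · h(r,θ) · exp(g k₀ θ) (radial and rotary modulation). Then M{m}(v,k) = M{h}(v − v₀, k − k₀) for all v ∈ ℝ and k ∈ ℤ. -/
open Quaternion MeasureTheory Real

lemma exp_smul_mul_exp_smul (f : ℍ[ℝ]) (a b : ℝ) :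
    NormedSpace.exp (a • f) * NormedSpace.exp (b • f) =
      NormedSpace.exp ((a + b) • f) := by
  let +nondep : NormedAlgebra ℚ ℍ := .restrictScalars ℚ ℝ ℍ
  rw [add_smul, NormedSpace.exp_add_of_commute]
  exact (Commute.refl f).smul_left a |>.smul_right b

theorem cfmt_modulation (f g : ℍ[ℝ]) (hf : f ^ 2 = -1) (hg : g ^ 2 = -1)
    (h : ℝ × ℝ → ℍ[ℝ]) (hInt : Integrable h mellinMeasure)
    (v₀ : ℝ) (k₀ : ℤ) (v : ℝ) (k : ℤ) :
    CFMT f g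
        (fun p => NormedSpace.exp ((v₀ * Real.log p.1) • f) * h p *
          NormedSpace.exp (((k₀ : ℝ) * p.2) • g)) v k =
      CFMT f g h (v - v₀) (k - k₀) := by
  unfold CFMT
  congr 1
  refine integral_congr_ae (Filter.Eventually.of_forall fun p => ?_)
  have h1 : NormedSpace.exp ((-(v * Real.log p.1)) • f) *
      NormedSpace.exp ((v₀ * Real.log p.1) • f) =
      NormedSpace.exp ((-((v - v₀) * Real.log p.1)) • f) := by
    rw [exp_smul_mul_exp_smul]; ring_nf
  have h2 : NormedSpace.exp (((k₀ : ℝ) * p.2) • g) *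
      NormedSpace.exp ((-((k : ℝ) * p.2)) • g) =
      NormedSpace.exp ((-(((k - k₀ : ℤ) : ℝ) * p.2)) • g) := by
    rw [exp_smul_mul_exp_smul]; push_cast; ring_nf
  calc NormedSpace.exp ((-(v * Real.log p.1)) • f) *
        (NormedSpace.exp ((v₀ * Real.log p.1) • f) * h p *
          NormedSpace.exp (((k₀ : ℝ) * p.2) • g)) *
        NormedSpace.exp ((-((k : ℝ) * p.2)) • g)
      = (NormedSpace.exp ((-(v * Real.log p.1)) • f) *
          NormedSpace.exp ((v₀ * Real.log p.1) • f)) * h p *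
        (NormedSpace.exp (((k₀ : ℝ) * p.2) • g) *
          NormedSpace.exp ((-((k : ℝ) * p.2)) • g)) := by simp only [mul_assoc]
    _ = _ := by rw [h1, h2]
end
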